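/- In a Π-doctrine with comprehension, the assignment (α,β) ↦ Π_{⌊α⌋}⌊α⌋*β provides an implicational structure if and only if the comprehension is full. -/

import Mathlib

open CategoryTheory CategoryTheory.Limits

universe w v u

/-- A doctrine: a contravariant functor from a category with finite products
to partially ordered sets, presented via a family of fibers `P` and monotone
reindexing maps. -/
structure Doctrine (C : Type u) [Category.{v} C] (P : C → Type w)
    [∀ A, PartialOrder (P A)] where
  map : ∀ {X A : C}, (X ⟶ A) → P A → P X
  map_mono : ∀ {X A : C} (f : X ⟶ A) ⦃α β : P A⦄, α ≤ β → map f α ≤ map f β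
  map_id : ∀ {A : C} (α : P A), map (𝟙 A) α = α
  map_comp : ∀ {X Y A : C} (f : X ⟶ Y) (g : Y ⟶ A) (α : P A),
    map (f ≫ g) α = map f (map g α)

variable {C : Type u} [Category.{v} C] {P : C → Type w}

/-- The opposite doctrine `P^o`, with fibers the opposite posets. -/
def Doctrine.op [∀ A, PartialOrder (P A)] (D : Doctrine C P) :
    Doctrine C (fun A => (P A)ᵒᵈ) where
  map f α := OrderDual.toDual (D.map f (OrderDual.ofDual α))
  map_mono f _ _ h := D.map_mono f h
  map_id := D.map_id
  map_comp := D.map_comp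

/-- Comprehension structure on a doctrine with fiberwise top elements. -/
structure Comprehension [∀ A, PartialOrder (P A)] [∀ A, OrderTop (P A)]
    (D : Doctrine C P) where
  cObj : ∀ {A : C}, P A → C
  cArr : ∀ {A : C} (α : P A), cObj α ⟶ A
  map_cArr : ∀ {A : C} (α : P A), D.map (cArr α) α = ⊤
  univ : ∀ {A Y : C} (α : P A) (f : Y ⟶ A), D.map f α = ⊤ →
    ∃! k : Y ⟶ cObj α, k ≫ cArr α = f

/-- Fullness of comprehension: the functor `α ↦ ⌊α⌋` into subobjects is full. -/
def Comprehension.IsFull [∀ A, PartialOrder (P A)] [∀ A, OrderTop (P A)]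
    {D : Doctrine C P} (cmp : Comprehension D) : Prop :=
  ∀ (A : C) (α β : P A) (g : cmp.cObj α ⟶ cmp.cObj β),
    g ≫ cmp.cArr β = cmp.cArr α → α ≤ β

/-- Co-comprehension structure on a doctrine with fiberwise bottom elements. -/
structure CoComprehension [∀ A, PartialOrder (P A)] [∀ A, OrderBot (P A)]
    (D : Doctrine C P) where
  oObj : ∀ {A : C}, P A → C
  oArr : ∀ {A : C} (α : P A), oObj α ⟶ A
  map_oArr : ∀ {A : C} (α : P A), D.map (oArr α) α = ⊥
  univ : ∀ {A Y : C} (α : P A) (f : Y ⟶ A), D.map f α = ⊥ →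
    ∃! k : Y ⟶ oObj α, k ≫ oArr α = f

/-- Fullness of co-comprehension: the contravariant functor `α ↦ ⌈α⌉` into
subobjects is full. -/
def CoComprehension.IsFull [∀ A, PartialOrder (P A)] [∀ A, OrderBot (P A)]
    {D : Doctrine C P} (co : CoComprehension D) : Prop :=
  ∀ (A : C) (α β : P A) (g : co.oObj β ⟶ co.oObj α),
    g ≫ co.oArr α = co.oArr β → α ≤ β

/-- A stable initial object: an initial object `Z` with `X × Z ≅ Z` for all `X`. -/
def StableInitial [HasFiniteProducts C] (Z : C) : Prop :=
  Nonempty (IsInitial Z) ∧ ∀ X : C, Nonempty ((X ⨯ Z) ≅ Z)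

/-- The axiom of choice for a doctrine: along every projection `π_Γ : Γ × A → Γ`
with `A` not a stable initial object, reindexing has a left adjoint, and every
`ψ ∈ P(Γ × A)` has a choice arrow `ε_ψ : Γ ⟶ A` with `Σ_{π_Γ}ψ = ⟨id, ε_ψ⟩*ψ`. -/
structure AxChoice [HasFiniteProducts C] [∀ A, PartialOrder (P A)]
    (D : Doctrine C P) where
  Sig : ∀ (Γ A : C), ¬ StableInitial A → P (Γ ⨯ A) → P Γ
  adj : ∀ {Γ A : C} (h : ¬ StableInitial A) (ψ : P (Γ ⨯ A)) (β : P Γ),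
    Sig Γ A h ψ ≤ β ↔ ψ ≤ D.map prod.fst β
  eps : ∀ {Γ A : C}, ¬ StableInitial A → P (Γ ⨯ A) → (Γ ⟶ A)
  eps_spec : ∀ {Γ A : C} (h : ¬ StableInitial A) (ψ : P (Γ ⨯ A)),
    Sig Γ A h ψ = D.map (prod.lift (𝟙 Γ) (eps h ψ)) ψ

/-- Elementary structure: equality predicates `δ_A` such that
`ψ ↦ π₁*ψ ⊓ π₂₃*δ_A` is left adjoint to reindexing along `id_X × Δ_A`. -/
structure Elementary [HasFiniteProducts C] [∀ A, SemilatticeInf (P A)]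
    (D : Doctrine C P) where
  eq : ∀ A : C, P (A ⨯ A)
  eq_adj : ∀ (X A : C) (ψ : P (X ⨯ A)) (φ : P ((X ⨯ A) ⨯ A)),
    (D.map prod.fst ψ ⊓ D.map (prod.map prod.snd (𝟙 A)) (eq A)) ≤ φ ↔
      ψ ≤ D.map (prod.lift (𝟙 (X ⨯ A)) prod.snd) φ

/-- An eaco: an elementary doctrine with full co-comprehension satisfying AC,
together with the compatibility of choice arrows for graphs of co-comprehension
arrows with reindexing. -/
structure Eaco [HasFiniteProducts C] [∀ A, SemilatticeInf (P A)]
    [∀ A, OrderBot (P A)] (D : Doctrine C P) where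
  elem : Elementary D
  cocmp : CoComprehension D
  full : cocmp.IsFull
  ac : AxChoice D
  compat : ∀ {X A : C} (f : X ⟶ A) (α : P A)
      (h1 : ¬ StableInitial (cocmp.oObj α))
      (h2 : ¬ StableInitial (cocmp.oObj (D.map f α))),
      D.map f (D.map (prod.lift (𝟙 A)
          (ac.eps h1 (D.map (prod.map (𝟙 A) (cocmp.oArr α)) (elem.eq A))))
        (D.map (prod.map (𝟙 A) (cocmp.oArr α)) (elem.eq A)))
      = D.map (prod.lift (𝟙 X)
          (ac.eps h2 (D.map (prod.map (𝟙 X) (cocmp.oArr (D.map f α))) (elem.eq X))))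
        (D.map (prod.map (𝟙 X) (cocmp.oArr (D.map f α))) (elem.eq X))

/-- Weak power objects: the doctrine is higher order. -/
structure HigherOrder [HasFiniteProducts C] [∀ A, PartialOrder (P A)]
    (D : Doctrine C P) where
  pow : C → C
  mem : ∀ A : C, P (A ⨯ pow A)
  classify : ∀ (A Y : C) (φ : P (A ⨯ Y)),
    ∃ χ : Y ⟶ pow A, D.map (prod.map (𝟙 A) χ) (mem A) = φ

/-- A heaco: a higher order eaco. -/
structure Heaco [HasFiniteProducts C] [∀ A, SemilatticeInf (P A)]
    [∀ A, OrderBot (P A)] (D : Doctrine C P) where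
  eaco : Eaco D
  ho : HigherOrder D

/-- Implicational structure relative to right adjoints `Pi` along projections. -/
structure Implicational [HasFiniteProducts C] [∀ A, PartialOrder (P A)]
    (D : Doctrine C P) (Pi : ∀ (Γ A : C), P (Γ ⨯ A) → P Γ) where
  imp : ∀ {A : C}, P A → P A → P A
  map_imp : ∀ {X A : C} (f : X ⟶ A) (α β : P A),
    D.map f (imp α β) = imp (D.map f α) (D.map f β)
  pi_imp : ∀ {Γ A : C} (α : P Γ) (β : P (Γ ⨯ A)),
    Pi Γ A (imp (D.map prod.fst α) β) = imp α (Pi Γ A β)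
  ax_a : ∀ {A : C} (φ ψ : P A), φ ≤ imp ψ φ
  ax_b : ∀ {A : C} (γ φ ψ : P A), imp γ (imp φ ψ) ≤ imp (imp γ φ) (imp γ ψ)
  ax_c : ∀ {A : C} (γ φ ψ : P A), γ ≤ imp φ ψ → γ ≤ φ → γ ≤ ψ
  ax_d : ∀ {A : C} (γ φ ψ : P A), φ ≤ ψ → γ ≤ imp φ ψ

/-- A tripos: a Heyting-algebra valued doctrine with `Σ` and `Π` along
projections satisfying Beck–Chevalley, equality predicates, and weak power
objects. -/
structure Tripos [HasFiniteProducts C] [∀ A, PartialOrder (P A)]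
    (D : Doctrine C P) where
  inf : ∀ {A : C}, P A → P A → P A
  sup : ∀ {A : C}, P A → P A → P A
  himp : ∀ {A : C}, P A → P A → P A
  top : ∀ A : C, P A
  bot : ∀ A : C, P A
  inf_le_left : ∀ {A : C} (α β : P A), inf α β ≤ α
  inf_le_right : ∀ {A : C} (α β : P A), inf α β ≤ β
  le_inf : ∀ {A : C} (γ α β : P A), γ ≤ α → γ ≤ β → γ ≤ inf α β
  le_sup_left : ∀ {A : C} (α β : P A), α ≤ sup α β
  le_sup_right : ∀ {A : C} (α β : P A), β ≤ sup α β
  sup_le : ∀ {A : C} (α β γ : P A), α ≤ γ → β ≤ γ → sup α β ≤ γ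
  le_top : ∀ {A : C} (α : P A), α ≤ top A
  bot_le : ∀ {A : C} (α : P A), bot A ≤ α
  himp_adj : ∀ {A : C} (γ α β : P A), γ ≤ himp α β ↔ inf γ α ≤ β
  map_inf : ∀ {X A : C} (f : X ⟶ A) (α β : P A),
    D.map f (inf α β) = inf (D.map f α) (D.map f β)
  map_sup : ∀ {X A : C} (f : X ⟶ A) (α β : P A),
    D.map f (sup α β) = sup (D.map f α) (D.map f β)
  map_himp : ∀ {X A : C} (f : X ⟶ A) (α β : P A),
    D.map f (himp α β) = himp (D.map f α) (D.map f β)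
  map_top : ∀ {X A : C} (f : X ⟶ A), D.map f (top A) = top X
  map_bot : ∀ {X A : C} (f : X ⟶ A), D.map f (bot A) = bot X
  Sig : ∀ (Γ A : C), P (Γ ⨯ A) → P Γ
  Sig_adj : ∀ {Γ A : C} (ψ : P (Γ ⨯ A)) (β : P Γ),
    Sig Γ A ψ ≤ β ↔ ψ ≤ D.map prod.fst β
  Sig_bc : ∀ {Γ Δ A : C} (f : Δ ⟶ Γ) (ψ : P (Γ ⨯ A)),
    D.map f (Sig Γ A ψ) = Sig Δ A (D.map (prod.map f (𝟙 A)) ψ)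
  Pi : ∀ (Γ A : C), P (Γ ⨯ A) → P Γ
  Pi_adj : ∀ {Γ A : C} (ψ : P (Γ ⨯ A)) (β : P Γ),
    β ≤ Pi Γ A ψ ↔ D.map prod.fst β ≤ ψ
  Pi_bc : ∀ {Γ Δ A : C} (f : Δ ⟶ Γ) (ψ : P (Γ ⨯ A)),
    D.map f (Pi Γ A ψ) = Pi Δ A (D.map (prod.map f (𝟙 A)) ψ)
  eq : ∀ X : C, P (X ⨯ X)
  eq_spec : ∀ {X : C} (α : P (X ⨯ X)),
    top X ≤ D.map (prod.lift (𝟙 X) (𝟙 X)) α ↔ eq X ≤ α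
  pow : C → C
  mem : ∀ A : C, P (A ⨯ pow A)
  classify : ∀ (A Y : C) (φ : P (A ⨯ Y)),
    ∃ χ : Y ⟶ pow A, D.map (prod.map (𝟙 A) χ) (mem A) = φ

/-- In a `Π`-doctrine with comprehension (with right adjoints along
comprehension arrows satisfying the restricted Beck–Chevalley condition), the
assignment `(α,β) ↦ Π_{⌊α⌋}⌊α⌋*β` provides an implicational structure if and
only if comprehension is full. -/
theorem statement3 {C : Type u} [Category.{v} C] [HasFiniteProducts C]
    {P : C → Type w} [∀ A, PartialOrder (P A)] [∀ A, OrderTop (P A)]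
    (D : Doctrine C P)
    (Pi : ∀ (Γ A : C), P (Γ ⨯ A) → P Γ)
    (Pi_adj : ∀ {Γ A : C} (ψ : P (Γ ⨯ A)) (β : P Γ),
      β ≤ Pi Γ A ψ ↔ D.map prod.fst β ≤ ψ)
    (Pi_bc : ∀ {Γ Δ A : C} (f : Δ ⟶ Γ) (ψ : P (Γ ⨯ A)),
      D.map f (Pi Γ A ψ) = Pi Δ A (D.map (prod.map f (𝟙 A)) ψ))
    (cmp : Comprehension D)
    (Pic : ∀ {A : C} (α : P A), P (cmp.cObj α) → P A)
    (Pic_adj : ∀ {A : C} (α : P A) (γ : P (cmp.cObj α)) (β : P A),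
      β ≤ Pic α γ ↔ D.map (cmp.cArr α) β ≤ γ)
    (Pic_bc : ∀ {X A : C} (f : X ⟶ A) (α : P A)
      (q : cmp.cObj (D.map f α) ⟶ cmp.cObj α),
      q ≫ cmp.cArr α = cmp.cArr (D.map f α) ≫ f →
      ∀ ξ : P A,
        D.map f (Pic α (D.map (cmp.cArr α) ξ))
          = Pic (D.map f α) (D.map q (D.map (cmp.cArr α) ξ))) :
    (∃ I : Implicational D Pi,
      ∀ (A : C) (φ ψ : P A), I.imp φ ψ = Pic φ (D.map (cmp.cArr φ) ψ))
    ↔ cmp.IsFull := by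
  constructor
  · rintro ⟨I, hI⟩
    -- first: reindexing preserves top
    have htop : ∀ {X B : C} (f : X ⟶ B), D.map f (⊤ : P B) = ⊤ := by
      intro X B f
      have h1 : I.imp (⊤ : P B) ⊤ = ⊤ := by
        refine le_antisymm le_top ?_
        rw [hI]
        exact (Pic_adj _ _ _).mpr le_rfl
      refine le_antisymm le_top ?_
      calc (⊤ : P X) ≤ I.imp (D.map f ⊤) (D.map f ⊤) := I.ax_d _ _ _ le_rfl
        _ = D.map f (I.imp ⊤ ⊤) := (I.map_imp f ⊤ ⊤).symm
        _ = D.map f ⊤ := by rw [h1]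
    intro A α β g hg
    have hb : D.map (cmp.cArr α) β = ⊤ := by
      calc D.map (cmp.cArr α) β = D.map g (D.map (cmp.cArr β) β) := by
            rw [← hg, D.map_comp]
        _ = ⊤ := by rw [cmp.map_cArr]; exact htop g
    have h1 : α ≤ I.imp α β := by
      rw [hI]
      refine (Pic_adj _ _ _).mpr ?_
      rw [hb]
      exact le_top
    exact I.ax_c α α β h1 le_rfl
  · intro hfull
    have char : ∀ {A : C} (γ φ ψ : P A),
        γ ≤ Pic φ (D.map (cmp.cArr φ) ψ) ↔
          D.map (cmp.cArr φ) γ ≤ D.map (cmp.cArr φ) ψ :=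
      fun γ φ ψ => Pic_adj φ (D.map (cmp.cArr φ) ψ) γ
    have pull_top : ∀ {A : C} {φ ψ : P A}, φ ≤ ψ → D.map (cmp.cArr φ) ψ = ⊤ := by
      intro A φ ψ h
      refine le_antisymm le_top ?_
      rw [← cmp.map_cArr φ]
      exact D.map_mono _ h
    have mp : ∀ {A : C} (γ φ ψ : P A),
        γ ≤ Pic φ (D.map (cmp.cArr φ) ψ) → γ ≤ φ → γ ≤ ψ := by
      intro A γ φ ψ h1 h2
      obtain ⟨k, hk, -⟩ := cmp.univ φ (cmp.cArr γ) (pull_top h2)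
      have h4 := D.map_mono k ((char γ φ ψ).mp h1)
      rw [← D.map_comp, ← D.map_comp, hk, cmp.map_cArr] at h4
      obtain ⟨k', hk', -⟩ := cmp.univ ψ (cmp.cArr γ) (le_antisymm le_top h4)
      exact hfull A γ ψ k' hk'
    have mimp : ∀ {X A : C} (f : X ⟶ A) (α β : P A),
        D.map f (Pic α (D.map (cmp.cArr α) β))
          = Pic (D.map f α) (D.map (cmp.cArr (D.map f α)) (D.map f β)) := by
      intro X A f α β
      have hq0 : D.map (cmp.cArr (D.map f α) ≫ f) α = ⊤ := by
        rw [D.map_comp, cmp.map_cArr]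
      obtain ⟨q, hq, -⟩ := cmp.univ α (cmp.cArr (D.map f α) ≫ f) hq0
      rw [Pic_bc f α q hq β, ← D.map_comp, hq, D.map_comp]
    refine ⟨⟨fun φ ψ => Pic φ (D.map (cmp.cArr φ) ψ), mimp, ?_, ?_, ?_, mp, ?_⟩,
      fun A φ ψ => rfl⟩
    · -- pi_imp
      intro Γ A α β
      refine le_antisymm ?_ ?_
      · rw [char, Pi_bc, Pi_bc, Pi_adj]
        refine mp _ (D.map (prod.map (cmp.cArr α) (𝟙 A)) (D.map prod.fst α))
          (D.map (prod.map (cmp.cArr α) (𝟙 A)) β)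
          (le_of_le_of_eq ((Pi_adj _ _).mp le_rfl)
            (mimp (prod.map (cmp.cArr α) (𝟙 A)) (D.map prod.fst α) β)) ?_
        have heq : D.map (prod.map (cmp.cArr α) (𝟙 A)) (D.map prod.fst α)
            = D.map (prod.fst : cmp.cObj α ⨯ A ⟶ cmp.cObj α) (⊤ : P (cmp.cObj α)) := by
          rw [← D.map_comp, prod.map_fst, D.map_comp, cmp.map_cArr]
        rw [heq]
        exact D.map_mono _ le_top
      · rw [Pi_adj, char]
        obtain ⟨k, hk, -⟩ := cmp.univ α
          (cmp.cArr (D.map (prod.fst : Γ ⨯ A ⟶ Γ) α) ≫ prod.fst)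
          (by rw [D.map_comp, cmp.map_cArr])
        set d := cmp.cArr (D.map (prod.fst : Γ ⨯ A ⟶ Γ) α) with hd
        set n : cmp.cObj (D.map (prod.fst : Γ ⨯ A ⟶ Γ) α) ⟶ cmp.cObj α ⨯ A :=
          prod.lift k (d ≫ prod.snd) with hn_def
        have hn : n ≫ prod.map (cmp.cArr α) (𝟙 A) = d := by
          apply Limits.prod.hom_ext
          · simp [hn_def, hk]
            exact prod.lift_fst _ _
          · simp [hn_def]
            exact prod.lift_snd _ _
        have harr : (n ≫ prod.fst) ≫ cmp.cArr α = d ≫ prod.fst := by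
          simp [hn_def, hk]
          rw [← Category.assoc, prod.lift_fst, hk]
        have h1 : D.map (cmp.cArr α) (Pic α (D.map (cmp.cArr α) (Pi Γ A β)))
            ≤ Pi (cmp.cObj α) A (D.map (prod.map (cmp.cArr α) (𝟙 A)) β) := by
          rw [← Pi_bc]
          exact (char _ _ _).mp le_rfl
        have h2 := (Pi_adj _ _).mp h1
        have h3 := D.map_mono n h2
        have e1 : D.map d (D.map prod.fst (Pic α (D.map (cmp.cArr α) (Pi Γ A β))))
            = D.map n (D.map prod.fst
                (D.map (cmp.cArr α) (Pic α (D.map (cmp.cArr α) (Pi Γ A β))))) := by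
          rw [← D.map_comp, ← D.map_comp, ← D.map_comp, harr]
        have e2 : D.map n (D.map (prod.map (cmp.cArr α) (𝟙 A)) β) = D.map d β := by
          rw [← D.map_comp, hn]
        calc D.map d (D.map prod.fst (Pic α (D.map (cmp.cArr α) (Pi Γ A β))))
            = D.map n (D.map prod.fst
                (D.map (cmp.cArr α) (Pic α (D.map (cmp.cArr α) (Pi Γ A β))))) := e1
          _ ≤ D.map n (D.map (prod.map (cmp.cArr α) (𝟙 A)) β) := h3
          _ = D.map d β := e2
    · -- ax_a
      intro A φ ψ
      exact (char φ ψ φ).mpr le_rfl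
    · -- ax_b
      intro A γ φ ψ
      beta_reduce
      set G := Pic γ (D.map (cmp.cArr γ) φ) with hG
      set e := cmp.cArr G with he
      refine (char _ _ _).mpr ?_
      rw [mimp e γ ψ, mimp e γ (Pic φ (D.map (cmp.cArr φ) ψ)), mimp e φ ψ]
      refine (char _ _ _).mpr ?_
      set c' := cmp.cArr (D.map e γ) with hc'
      set N := Pic (D.map e φ) (D.map (cmp.cArr (D.map e φ)) (D.map e ψ)) with hN
      set Z := D.map c' (Pic (D.map e γ) (D.map (cmp.cArr (D.map e γ)) N)) with hZ
      have step1 : Z ≤ D.map c' N := by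
        refine mp _ (D.map c' (D.map e γ)) _ ?_ ?_
        · exact (mimp c' (D.map e γ) N).le
        · rw [hc', cmp.map_cArr]
          exact le_top
      have hTE : D.map e G = ⊤ := by
        rw [he]
        exact cmp.map_cArr _
      have hGf : (⊤ : P (cmp.cObj G))
          = Pic (D.map e γ) (D.map (cmp.cArr (D.map e γ)) (D.map e φ)) := by
        rw [← mimp e γ φ, ← hG, hTE]
      have hphi : (⊤ : P (cmp.cObj (D.map e γ))) ≤ D.map c' (D.map e φ) := by
        refine mp _ (D.map c' (D.map e γ)) _ ?_ ?_
        · calc (⊤ : P (cmp.cObj (D.map e γ)))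
              = D.map c' (D.map e γ) := by rw [hc', cmp.map_cArr]
            _ ≤ D.map c' ⊤ := D.map_mono _ le_top
            _ = D.map c' (Pic (D.map e γ)
                  (D.map (cmp.cArr (D.map e γ)) (D.map e φ))) := by rw [hGf]
            _ = Pic (D.map c' (D.map e γ))
                  (D.map (cmp.cArr (D.map c' (D.map e γ)))
                    (D.map c' (D.map e φ))) := mimp c' _ _
        · rw [hc', cmp.map_cArr]
      have step2 : Z ≤ Pic (D.map c' (D.map e φ))
          (D.map (cmp.cArr (D.map c' (D.map e φ))) (D.map c' (D.map e ψ))) :=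
        step1.trans (mimp c' (D.map e φ) (D.map e ψ)).le
      exact mp Z (D.map c' (D.map e φ)) (D.map c' (D.map e ψ)) step2
        (le_top.trans hphi)
    · -- ax_d
      intro A γ φ ψ h
      refine (char γ φ ψ).mpr ?_
      rw [pull_top h]
      exact le_top
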